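/- If L : X × X* → ℝ ∪ {+∞} is a proper convex lower semicontinuous Lagrangian on a reflexive Banach space X and its dual, satisfying L(x,p) ≥ ⟨x,p⟩ for all (x,p), then for any x, if p ∈ ∂̄L(x) (i.e., L(x,p) = ⟨x,p⟩) then (p,x) ∈ ∂L(x,p), i.e., p ∈ δL(x). -/

import Mathlib

open NormedSpace

/-- For a proper convex lsc Lagrangian `L` on `X × X*` with
`L(x,p) ≥ ⟨x,p⟩`, if `p ∈ ∂̄L(x)` (i.e. `L(x,p) = ⟨x,p⟩`) then `(p,x) ∈ ∂L(x,p)`,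
i.e. `p ∈ δL(x)`. -/
theorem stmt0 {X : Type*} [NormedAddCommGroup X] [NormedSpace ℝ X] [CompleteSpace X]
    (hrefl : Function.Surjective (NormedSpace.inclusionInDoubleDual ℝ X))
    (L : X × StrongDual ℝ X → EReal)
    (hproper : (∃ z, L z ≠ ⊤) ∧ ∀ z, L z ≠ ⊥)
    (hconv : ∀ a b : X × StrongDual ℝ X, ∀ t : ℝ, 0 ≤ t → t ≤ 1 →
      L (t • a + (1 - t) • b) ≤ (t : EReal) * L a + ((1 - t : ℝ) : EReal) * L b)
    (hlsc : LowerSemicontinuous L)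
    (hge : ∀ x p, ((p x : ℝ) : EReal) ≤ L (x, p))
    (x : X) (p : StrongDual ℝ X)
    (hp : L (x, p) = ((p x : ℝ) : EReal)) :
    ∀ y q, L (x, p) + ((p (y - x) + (q - p) x : ℝ) : EReal) ≤ L (y, q) := by
  intro y q
  rw [hp, ← EReal.coe_add]
  set A : ℝ := p x with hA
  set B : ℝ := p (y - x) + (q - p) x with hB
  set C : ℝ := (q - p) (y - x) with hC
  by_cases hT : L (y, q) = ⊤
  · rw [hT]; exact le_top
  -- L (y,q) is a real number
  rw [← EReal.coe_toReal hT (hproper.2 (y, q))]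
  set M : ℝ := (L (y, q)).toReal with hM
  -- key real inequality
  have key : ∀ t : ℝ, 0 < t → t ≤ 1 → A + t * B + t ^ 2 * C ≤ t * M + (1 - t) * A := by
    intro t ht0 ht1
    have h1 := hconv (y, q) (x, p) t (le_of_lt ht0) ht1
    have hpt : (t • ((y, q) : X × StrongDual ℝ X) + (1 - t) • (x, p))
        = (t • y + (1 - t) • x, t • q + (1 - t) • p) := rfl
    rw [hpt, hp, ← EReal.coe_toReal hT (hproper.2 (y, q)), ← hM] at h1
    have h2 := hge (t • y + (1 - t) • x) (t • q + (1 - t) • p)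
    have h3 : ((t • q + (1 - t) • p) (t • y + (1 - t) • x) : EReal)
        ≤ ((t * M + (1 - t) * A : ℝ) : EReal) := by
      refine le_trans h2 (le_trans h1 ?_)
      rw [← EReal.coe_mul, ← EReal.coe_mul, ← EReal.coe_add]
    rw [EReal.coe_le_coe_iff] at h3
    have hval : (t • q + (1 - t) • p) (t • y + (1 - t) • x) = A + t * B + t ^ 2 * C := by
      simp only [hA, hB, hC, ContinuousLinearMap.add_apply, ContinuousLinearMap.smul_apply,
        ContinuousLinearMap.sub_apply, map_add, map_smul, map_sub, smul_eq_mul]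
      ring
    rw [hval] at h3
    exact h3
  -- conclude A + B ≤ M
  have hfinal : ∀ ε : ℝ, 0 < ε → A + B ≤ M + ε := by
    intro ε hε
    set t : ℝ := min 1 (ε / (|C| + 1)) with htdef
    have habs : (0:ℝ) < |C| + 1 := by positivity
    have ht0 : 0 < t := lt_min one_pos (div_pos hε habs)
    have ht1 : t ≤ 1 := min_le_left _ _
    have hk := key t ht0 ht1
    have h4 : A + B + t * C ≤ M := by
      have h5 : t * (A + B + t * C) ≤ t * M := by nlinarith [hk]
      exact le_of_mul_le_mul_left h5 ht0
    have htC : t * C ≥ -ε := by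
      have h6 : t ≤ ε / (|C| + 1) := min_le_right _ _
      have h7 : t * |C| ≤ ε := by
        calc t * |C| ≤ (ε / (|C| + 1)) * |C| := by
              exact mul_le_mul_of_nonneg_right h6 (abs_nonneg C)
          _ ≤ ε := by
              rw [div_mul_eq_mul_div, div_le_iff₀ habs]
              nlinarith [abs_nonneg C]
      nlinarith [neg_abs_le C, abs_nonneg C, mul_le_mul_of_nonneg_left (neg_abs_le C) (le_of_lt ht0)]
    linarith
  have : A + B ≤ M := le_of_forall_pos_le_add hfinal
  exact EReal.coe_le_coe_iff.mpr this
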